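/- For the vectorial boolean negation f_0(x_1,…,x_N) = (x̄_1,…,x̄_N), the map G_{f_0} on (X,d) is topologically transitive: for any pair of nonempty open sets U, V ⊆ X there exists k > 0 such that G_{f_0}^k(U) ∩ V ≠ ∅. -/

import Mathlib

open Finset

/-- The state distance `d_e`: number of differing boolean components (Hamming distance). -/
def de (N : ℕ) (E F : Fin N → Bool) : ℕ := hammingDist E F

/-- The strategy distance `d_s(S,Š) = (9/N) Σ_{k=1}^∞ |S^k − Š^k|/10^k`
(strategies are 0-indexed here, so term `k` of the sequence gets weight `10^{-(k+1)}`). -/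
noncomputable def ds (N : ℕ) (S T : ℕ → Fin N) : ℝ :=
  (9 / N) * ∑' k : ℕ, |((S k : ℕ) : ℝ) - ((T k : ℕ) : ℝ)| / 10 ^ (k + 1)

/-- The distance `d = d_e + d_s` on `X = ⟦1;N⟧^ℕ × 𝔹^N`. -/
noncomputable def dX (N : ℕ) (x y : (ℕ → Fin N) × (Fin N → Bool)) : ℝ :=
  (de N x.2 y.2 : ℝ) + ds N x.1 y.1

/-- `F_f(k,E)`: the vector equal to `E` except the `k`-th component, which becomes `f(E)_k`. -/
def Ff (N : ℕ) (f : (Fin N → Bool) → (Fin N → Bool)) (k : Fin N)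
    (E : Fin N → Bool) : Fin N → Bool :=
  fun j => if j = k then f E k else E j

/-- `G_f(S,E) = (σ(S), F_f(i(S),E))`, with `σ` the shift and `i(S) = S^0`. -/
noncomputable def Gf (N : ℕ) (f : (Fin N → Bool) → (Fin N → Bool)) :
    (ℕ → Fin N) × (Fin N → Bool) → (ℕ → Fin N) × (Fin N → Bool) :=
  fun p => (fun n => p.1 (n + 1), Ff N f (p.1 0) p.2)

/-- The vectorial boolean negation `f_0`. -/
def f0 (N : ℕ) : (Fin N → Bool) → (Fin N → Bool) := fun E i => !(E i)

/-! ### Auxiliary definitions and lemmas -/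

/-- Flip the `k`-th component of `E`. -/
def flipC (N : ℕ) (k : Fin N) (E : Fin N → Bool) : Fin N → Bool :=
  fun j => if j = k then !E j else E j

lemma Ff_f0 {N : ℕ} (k : Fin N) (E : Fin N → Bool) : Ff N (f0 N) k E = flipC N k E := by
  funext j; by_cases h : j = k <;> simp [Ff, f0, flipC, h]

/-- Apply a list of flips successively. -/
def applyL (N : ℕ) (l : List (Fin N)) (E : Fin N → Bool) : Fin N → Bool :=
  l.foldl (fun E k => flipC N k E) E

lemma applyL_append {N : ℕ} (a b : List (Fin N)) (E : Fin N → Bool) :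
    applyL N (a ++ b) E = applyL N b (applyL N a E) := by
  simp [applyL, List.foldl_append]

/-- A strategy beginning with the terms of a list and continuing with a given tail. -/
def seqOf (N : ℕ) (l : List (Fin N)) (T : ℕ → Fin N) : ℕ → Fin N :=
  fun n => if h : n < l.length then l.get ⟨n, h⟩ else T (n - l.length)

lemma seqOf_shift {N : ℕ} (k : Fin N) (l : List (Fin N)) (T : ℕ → Fin N) (n : ℕ) :
    seqOf N (k :: l) T (n + 1) = seqOf N l T n := by
  simp only [seqOf, List.length_cons]
  by_cases h : n < l.length
  · rw [dif_pos (by omega), dif_pos h]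
    simp [List.get_cons_succ]
  · rw [dif_neg (by omega), dif_neg h]
    congr 1; omega

/-- Iterating `G_{f_0}` along a list-prefixed strategy. -/
lemma Gf_iter {N : ℕ} (l : List (Fin N)) (T : ℕ → Fin N) (E : Fin N → Bool) :
    (Gf N (f0 N))^[l.length] (seqOf N l T, E) = (T, applyL N l E) := by
  induction l generalizing E with
  | nil =>
    simp only [List.length_nil, Function.iterate_zero, id_eq, applyL, List.foldl_nil]
    refine Prod.ext ?_ rfl
    funext n; simp [seqOf]
  | cons k l ih =>
    rw [List.length_cons, Function.iterate_succ_apply]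
    have h1 : Gf N (f0 N) (seqOf N (k :: l) T, E) = (seqOf N l T, flipC N k E) := by
      simp only [Gf]
      refine Prod.ext ?_ ?_
      · funext n; exact seqOf_shift k l T n
      · have h0 : seqOf N (k :: l) T 0 = k := by simp [seqOf]
        rw [h0, Ff_f0]
    rw [h1, ih]
    simp [applyL]

/-- The steering list: for each index in `l`, flip it once if `E` and `y` differ there,
twice otherwise. -/
def mkL (N : ℕ) (y E : Fin N → Bool) : List (Fin N) → List (Fin N)
  | [] => []
  | i :: is => (if E i = y i then [i, i] else [i]) ++ mkL N y E is

lemma mkL_apply {N : ℕ} (y E : Fin N → Bool) : ∀ (l : List (Fin N)), l.Nodup →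
    ∀ (E' : Fin N → Bool), (∀ j ∈ l, E' j = E j) →
    ∀ j, applyL N (mkL N y E l) E' j = if j ∈ l then y j else E' j := by
  intro l
  induction l with
  | nil => intro _ E' _ j; simp [mkL, applyL]
  | cons i is ih =>
    intro hnd E' hE' j
    have hi : i ∉ is := (List.nodup_cons.mp hnd).1
    rw [mkL, applyL_append]
    set E'' : Fin N → Bool := fun j => if j = i then y j else E' j with hE''def
    have hblock : applyL N (if E i = y i then [i, i] else [i]) E' = E'' := by
      funext j'
      by_cases h : E i = y i
      · rw [if_pos h]
        simp only [applyL, List.foldl_cons, List.foldl_nil, flipC, hE''def]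
        by_cases hj : j' = i
        · simp [hj, ← h, hE' i (by simp)]
        · simp [hj]
      · rw [if_neg h]
        simp only [applyL, List.foldl_cons, List.foldl_nil, flipC, hE''def]
        by_cases hj : j' = i
        · subst hj
          have h1 : E' j' = E j' := hE' j' (by simp)
          rw [if_pos rfl, if_pos rfl, h1]
          revert h; cases E j' <;> cases y j' <;> simp
        · simp [hj]
    rw [hblock]
    have hE''is : ∀ j ∈ is, E'' j = E j := by
      intro j' hj'
      have : j' ≠ i := fun h => hi (h ▸ hj')
      simp [hE''def, this, hE' j' (List.mem_cons_of_mem _ hj')]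
    rw [ih (List.nodup_cons.mp hnd).2 E'' hE''is j]
    by_cases h1 : j ∈ is
    · simp [h1, List.mem_cons_of_mem _ h1]
    · by_cases h2 : j = i
      · simp [h1, h2, hE''def]
      · simp [h1, h2, hE''def]

lemma mkL_length_pos {N : ℕ} (y E : Fin N → Bool) (i : Fin N) (l : List (Fin N)) :
    0 < (mkL N y E (i :: l)).length := by
  rw [mkL]
  by_cases h : E i = y i <;> simp [h]

lemma ds_self (N : ℕ) (S : ℕ → Fin N) : ds N S S = 0 := by
  simp [ds]

lemma summable_bnd (N : ℕ) : Summable (fun k : ℕ => (N : ℝ) * (1 / 10) ^ (k + 1)) := by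
  have : Summable (fun k : ℕ => ((N : ℝ) * (1 / 10)) * (1 / 10) ^ k) :=
    (summable_geometric_of_lt_one (by norm_num) (by norm_num)).mul_left _
  convert this using 2 with k
  ring

lemma term_nonneg (N : ℕ) (S T : ℕ → Fin N) (k : ℕ) :
    0 ≤ |((S k : ℕ) : ℝ) - ((T k : ℕ) : ℝ)| / 10 ^ (k + 1) := by positivity

lemma term_le (N : ℕ) (S T : ℕ → Fin N) (k : ℕ) :
    |((S k : ℕ) : ℝ) - ((T k : ℕ) : ℝ)| / 10 ^ (k + 1) ≤ (N : ℝ) * (1 / 10) ^ (k + 1) := by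
  have h1 : |((S k : ℕ) : ℝ) - ((T k : ℕ) : ℝ)| ≤ (N : ℝ) := by
    rw [abs_sub_le_iff]
    have hS : ((S k : ℕ) : ℝ) ≤ N := by exact_mod_cast le_of_lt (S k).2
    have hT : ((T k : ℕ) : ℝ) ≤ N := by exact_mod_cast le_of_lt (T k).2
    constructor <;> [skip; skip] <;>
      · have : (0:ℝ) ≤ ((S k : ℕ) : ℝ) := by positivity
        have : (0:ℝ) ≤ ((T k : ℕ) : ℝ) := by positivity
        linarith
  have h2 : (0:ℝ) < 10 ^ (k + 1) := by positivity
  rw [div_le_iff₀ h2]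
  calc |((S k : ℕ) : ℝ) - ((T k : ℕ) : ℝ)| ≤ (N : ℝ) := h1
    _ = (N : ℝ) * (1 / 10) ^ (k + 1) * 10 ^ (k + 1) := by
        rw [div_pow, one_pow, mul_assoc, div_mul_cancel₀]
        · ring
        · positivity

lemma summable_term (N : ℕ) (S T : ℕ → Fin N) :
    Summable (fun k : ℕ => |((S k : ℕ) : ℝ) - ((T k : ℕ) : ℝ)| / 10 ^ (k + 1)) :=
  Summable.of_nonneg_of_le (term_nonneg N S T) (term_le N S T) (summable_bnd N)

lemma ds_le (N : ℕ) (hN : 1 ≤ N) (n : ℕ) (S T : ℕ → Fin N)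
    (h : ∀ k < n, S k = T k) : ds N S T ≤ (1 / 10) ^ n := by
  set g : ℕ → ℝ := fun k => |((S k : ℕ) : ℝ) - ((T k : ℕ) : ℝ)| / 10 ^ (k + 1) with hg
  have hsum : Summable g := summable_term N S T
  have hsplit := (Summable.sum_add_tsum_nat_add n hsum).symm
  have hzero : ∑ i ∈ Finset.range n, g i = 0 := by
    apply Finset.sum_eq_zero
    intro i hi
    have := h i (Finset.mem_range.mp hi)
    simp [hg, this]
  have htail : ∑' k, g (k + n) ≤ ∑' k : ℕ, (N : ℝ) * (1 / 10) ^ (k + n + 1) := by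
    apply Summable.tsum_le_tsum
    · intro k; exact term_le N S T (k + n)
    · exact hsum.comp_injective (add_left_injective n)
    · have : Summable (fun k : ℕ => (N : ℝ) * (1 / 10) ^ (k + 1)) := summable_bnd N
      have := (summable_bnd N).comp_injective (add_left_injective n)
      exact this.congr (fun k => rfl)
  have hgeo : ∑' k : ℕ, (N : ℝ) * (1 / 10) ^ (k + n + 1) = (N : ℝ) * (1/10) ^ n / 9 := by
    have : ∀ k : ℕ, (N : ℝ) * (1 / 10) ^ (k + n + 1) =
        ((N : ℝ) * (1/10)^(n+1)) * (1/10) ^ k := by intro k; ring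
    rw [tsum_congr this, tsum_mul_left, tsum_geometric_of_lt_one (by norm_num) (by norm_num)]
    field_simp
    ring
  have hNpos : (0:ℝ) < N := by exact_mod_cast hN
  have hds : ds N S T = (9 / N) * ∑' k, g k := rfl
  rw [hds, hsplit, hzero, zero_add]
  calc (9 / (N:ℝ)) * ∑' k, g (k + n) ≤ (9 / N) * ((N : ℝ) * (1/10) ^ n / 9) := by
        apply mul_le_mul_of_nonneg_left (le_trans htail (le_of_eq hgeo)) (by positivity)
    _ = (1/10) ^ n := by field_simp

/-- `G_{f_0}` is topologically transitive on `(X,d)`: formulated via metric balls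
(every nonempty open set contains a ball, so this is equivalent to the
open-sets formulation). -/
theorem Gf0_transitive (N : ℕ) (hN : 1 ≤ N) :
    ∀ (x y : (ℕ → Fin N) × (Fin N → Bool)) (ε₁ ε₂ : ℝ), 0 < ε₁ → 0 < ε₂ →
      ∃ k > 0, ∃ z : (ℕ → Fin N) × (Fin N → Bool),
        dX N x z < ε₁ ∧ dX N ((Gf N (f0 N))^[k] z) y < ε₂ := by
  intro x y ε₁ ε₂ hε₁ hε₂
  -- choose `n` with `(1/10)^n < ε₁`
  obtain ⟨n, hn⟩ : ∃ n : ℕ, (1/10 : ℝ)^n < ε₁ :=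
    exists_pow_lt_of_lt_one hε₁ (by norm_num)
  -- prefix copying `x.1`, then the steering list, then tail `y.1`
  set pfx : List (Fin N) := List.ofFn (fun i : Fin n => x.1 i) with hpfx
  have hpfxlen : pfx.length = n := by simp [hpfx]
  set E : Fin N → Bool := applyL N pfx x.2 with hE
  set L : List (Fin N) := mkL N y.2 E (List.finRange N) with hL
  set M : List (Fin N) := pfx ++ L with hM
  set z : (ℕ → Fin N) × (Fin N → Bool) := (seqOf N M y.1, x.2) with hz
  -- `L` is nonempty
  obtain ⟨i, l, hil⟩ : ∃ i l, List.finRange N = i :: l := by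
    cases h : List.finRange N with
    | nil =>
      exfalso
      have := List.length_finRange (n := N)
      rw [h] at this
      simp at this
      omega
    | cons a b => exact ⟨a, b, rfl⟩
  have hLpos : 0 < L.length := by rw [hL, hil]; exact mkL_length_pos _ _ _ _
  refine ⟨M.length, by simp [hM]; omega, z, ?_, ?_⟩
  · -- `z` is close to `x`
    have hde : de N x.2 z.2 = 0 := by simp [hz, de]
    have hagree : ∀ k < n, x.1 k = z.1 k := by
      intro k hk
      have hkM : k < M.length := by
        rw [hM, List.length_append, hpfxlen]; omega
      have : z.1 k = M.get ⟨k, hkM⟩ := by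
        simp only [hz, seqOf, dif_pos hkM]
      rw [this]
      have hkp : k < pfx.length := by omega
      have : M.get ⟨k, hkM⟩ = pfx.get ⟨k, hkp⟩ := by
        simp only [List.get_eq_getElem, hM]
        exact List.getElem_append_left hkp
      rw [this]
      simp [hpfx]
    have := ds_le N hN n x.1 z.1 hagree
    calc dX N x z = ds N x.1 z.1 := by rw [dX, hde]; simp
      _ ≤ (1/10)^n := this
      _ < ε₁ := hn
  · -- the iterate lands exactly on `y`
    have hiter : (Gf N (f0 N))^[M.length] z = (y.1, applyL N M x.2) := Gf_iter M y.1 x.2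
    have happly : applyL N M x.2 = y.2 := by
      rw [hM, applyL_append, ← hE]
      funext j
      rw [mkL_apply y.2 E (List.finRange N) (List.nodup_finRange N) E (fun _ _ => rfl) j]
      simp [List.mem_finRange]
    rw [hiter, happly]
    have : dX N (y.1, y.2) y = 0 := by
      simp [dX, de, ds_self]
    rw [this]
    exact hε₂
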